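/- Let E be a real inner product space, let q ∈ E be nonzero, let τ > 0 and C > 0, and define f : E → ℝ by f(u) = −log( exp(⟪q,u⟫/τ) / (exp(⟪q,u⟫/τ) + C) ). Then f is differentiable at every u, its Fréchet derivative at u is the map w ↦ −((1 − p(u))/τ) · ⟪q, w⟫ where p(u) = exp(⟪q,u⟫/τ)/(exp(⟪q,u⟫/τ)+C), the gradient of f at u equals −((1 − p(u))/τ) • q = −(‖q‖(1 − p(u))/τ) • q̂, and the norm of this gradient equals (‖q‖/τ)(1 − p(u)). In particular the gradient magnitude with respect to the positive document is proportional to the query magnitude ‖q‖. -/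

import Mathlib

open RealInnerProductSpace

/-- Gradient Asymmetry, parts (2)–(3): for
`f(u) = −log(exp(⟪q,u⟫/τ)/(exp(⟪q,u⟫/τ)+C))`, the Fréchet derivative at `u` is
`w ↦ −((1−p(u))/τ)·⟪q,w⟫`, the gradient is `−((1−p(u))/τ) • q = −(‖q‖(1−p(u))/τ) • q̂`,
and its norm is `(‖q‖/τ)(1−p(u))`, proportional to the query magnitude `‖q‖`. -/
theorem infoNCE_gradient_proportional_to_query_magnitude {E : Type*}
    [NormedAddCommGroup E] [InnerProductSpace ℝ E] [CompleteSpace E]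
    (q : E) (hq : q ≠ 0) (τ C : ℝ) (hτ : 0 < τ) (hC : 0 < C) (u : E) :
    HasFDerivAt
        (fun u : E => -Real.log (Real.exp (⟪q, u⟫ / τ) / (Real.exp (⟪q, u⟫ / τ) + C)))
        ((-((1 - Real.exp (⟪q, u⟫ / τ) / (Real.exp (⟪q, u⟫ / τ) + C)) / τ)) • innerSL ℝ q)
        u ∧
    HasGradientAt
        (fun u : E => -Real.log (Real.exp (⟪q, u⟫ / τ) / (Real.exp (⟪q, u⟫ / τ) + C)))
        ((-((1 - Real.exp (⟪q, u⟫ / τ) / (Real.exp (⟪q, u⟫ / τ) + C)) / τ)) • q) u ∧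
    (-((1 - Real.exp (⟪q, u⟫ / τ) / (Real.exp (⟪q, u⟫ / τ) + C)) / τ)) • q =
      (-(‖q‖ * (1 - Real.exp (⟪q, u⟫ / τ) / (Real.exp (⟪q, u⟫ / τ) + C)) / τ)) •
        (‖q‖⁻¹ • q) ∧
    ‖(-((1 - Real.exp (⟪q, u⟫ / τ) / (Real.exp (⟪q, u⟫ / τ) + C)) / τ)) • q‖ =
      (‖q‖ / τ) * (1 - Real.exp (⟪q, u⟫ / τ) / (Real.exp (⟪q, u⟫ / τ) + C)) := by
  set s : ℝ := ⟪q, u⟫ / τ with hs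
  set p : ℝ := Real.exp s / (Real.exp s + C) with hp
  have hden : 0 < Real.exp s + C := by positivity
  have hplt : p < 1 := by
    rw [hp, div_lt_one hden]; linarith [Real.exp_pos s]
  have hppos : 0 < p := by positivity
  -- scalar function h(t) = -log(exp(t/τ)/(exp(t/τ)+C)) has derivative -((1-p)/τ) at t = ⟪q,u⟫
  have hinner : HasFDerivAt (fun v : E => ⟪q, v⟫) (innerSL ℝ q) u :=
    (innerSL ℝ q).hasFDerivAt
  have hscalar : HasDerivAt (fun t : ℝ => -Real.log (Real.exp (t / τ) / (Real.exp (t / τ) + C)))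
      (-((1 - p) / τ)) ⟪q, u⟫ := by
    have h1 : HasDerivAt (fun t : ℝ => t / τ) (1 / τ) ⟪q, u⟫ := by
      simpa using (hasDerivAt_id (⟪q, u⟫ : ℝ)).div_const τ
    have h2 : HasDerivAt (fun t : ℝ => Real.exp (t / τ)) (Real.exp s * (1 / τ)) ⟪q, u⟫ :=
      h1.exp
    have h3 : HasDerivAt (fun t : ℝ => Real.exp (t / τ) + C) (Real.exp s * (1 / τ)) ⟪q, u⟫ :=
      h2.add_const C
    have hdenne : Real.exp s + C ≠ 0 := ne_of_gt hden
    have h4 : HasDerivAt (fun t : ℝ => Real.exp (t / τ) / (Real.exp (t / τ) + C))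
        ((Real.exp s * (1 / τ) * (Real.exp s + C) - Real.exp s * (Real.exp s * (1 / τ))) /
          (Real.exp s + C) ^ 2) ⟪q, u⟫ := h2.div h3 hdenne
    have h5 : HasDerivAt (fun t : ℝ => Real.log (Real.exp (t / τ) / (Real.exp (t / τ) + C)))
        (((Real.exp s * (1 / τ) * (Real.exp s + C) - Real.exp s * (Real.exp s * (1 / τ))) /
          (Real.exp s + C) ^ 2) / p) ⟪q, u⟫ := by
      apply h4.log (ne_of_gt hppos)
    have := h5.neg
    have key : -((1 - p) / τ) = -(((Real.exp s * (1 / τ) * (Real.exp s + C) -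
        Real.exp s * (Real.exp s * (1 / τ))) / (Real.exp s + C) ^ 2) / p) := by
      rw [hp]
      field_simp
    rw [key]
    exact this
  refine ⟨?_, ?_, ?_, ?_⟩
  · exact hscalar.comp_hasFDerivAt u hinner
  · rw [hasGradientAt_iff_hasFDerivAt]
    have heq : (InnerProductSpace.toDual ℝ E) (-((1 - p) / τ) • q) =
        -((1 - p) / τ) • (innerSL ℝ) q := by
      ext w
      simp [real_inner_smul_left]
    rw [heq]
    exact hscalar.comp_hasFDerivAt u hinner
  · rw [smul_smul]
    congr 1
    have hqn : ‖q‖ ≠ 0 := norm_ne_zero_iff.mpr hq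
    field_simp
  · rw [norm_smul, Real.norm_eq_abs, abs_of_nonpos (by
      have : 0 ≤ (1 - p) / τ := div_nonneg (by linarith) hτ.le
      linarith)]
    field_simp
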